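/- Define l(α)=inf{ λ(αu,ℝ^d) : u∈B₁, I(u)≤d }, where λ(V,D) is the principal Dirichlet eigenvalue of −(1/2)Δ−V on D. Then l is concave, continuous, l(0)=0, l≤0 everywhere, and −αM ≤ l(α) for α≥0, −αm ≤ l(α) for α≤0, where m=essinf ξ, M=esssup ξ. -/

import Mathlib

open MeasureTheory
open scoped ENNReal

/-- The principal Dirichlet eigenvalue of `−(1/2)Δ − V` on `ℝ^d`, defined
variationally over (smooth compactly supported) test functions of unit `L²`
norm. -/
noncomputable def eigen (d : ℕ) (V : EuclideanSpace ℝ (Fin d) → ℝ) : ℝ :=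
  sInf {r : ℝ | ∃ f : EuclideanSpace ℝ (Fin d) → ℝ,
    ContDiff ℝ 1 f ∧ HasCompactSupport f ∧ (∫ x, (f x) ^ 2) = 1 ∧
    r = 1 / 2 * (∫ x, ‖gradient f x‖ ^ 2) - ∫ x, V x * (f x) ^ 2}

/-- `l(α) = inf { λ(α u, ℝ^d) : u ∈ B₁, I(u) ≤ d }` with `I(u) = ∫ H(u) dx`. -/
noncomputable def ell (d : ℕ) (H : ℝ → ℝ≥0∞) (α : ℝ) : ℝ :=
  sInf {r : ℝ | ∃ u : EuclideanSpace ℝ (Fin d) → ℝ,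
    Measurable u ∧ (∀ x, |u x| ≤ 1) ∧ (∫⁻ x, H (u x)) ≤ (d : ℝ≥0∞) ∧
    r = eigen d (fun x => α * u x)}

/-! ### Auxiliary material -/

section Aux

open Metric

abbrev Ed (d : ℕ) := EuclideanSpace ℝ (Fin d)

/-- The variational set defining `eigen`. -/
def ES (d : ℕ) (V : Ed d → ℝ) : Set ℝ :=
  {r : ℝ | ∃ f : Ed d → ℝ,
    ContDiff ℝ 1 f ∧ HasCompactSupport f ∧ (∫ x, (f x) ^ 2) = 1 ∧
    r = 1 / 2 * (∫ x, ‖gradient f x‖ ^ 2) - ∫ x, V x * (f x) ^ 2}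

lemma eigen_eq (d : ℕ) (V : Ed d → ℝ) : eigen d V = sInf (ES d V) := rfl

/-- The variational set defining `ell`. -/
def LS (d : ℕ) (H : ℝ → ℝ≥0∞) (α : ℝ) : Set ℝ :=
  {r : ℝ | ∃ u : Ed d → ℝ,
    Measurable u ∧ (∀ x, |u x| ≤ 1) ∧ (∫⁻ x, H (u x)) ≤ (d : ℝ≥0∞) ∧
    r = eigen d (fun x => α * u x)}

lemma ell_eq (d : ℕ) (H : ℝ → ℝ≥0∞) (α : ℝ) : ell d H α = sInf (LS d H α) := rfl

/-- A `C¹` compactly supported function of unit `L²` norm exists. -/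
lemma exists_test (d : ℕ) (hd : 0 < d) :
    ∃ f : Ed d → ℝ, ContDiff ℝ 1 f ∧ HasCompactSupport f ∧ (∫ x, f x ^ 2) = 1 := by
  have : Nonempty (Fin d) := ⟨⟨0, hd⟩⟩
  let φ : ContDiffBump (0 : Ed d) := ⟨1, 2, one_pos, one_lt_two⟩
  have hc : Continuous (fun x => (φ x) ^ 2) := φ.continuous.pow 2
  have hcs : HasCompactSupport (fun x => (φ x) ^ 2) := by
    have h := φ.hasCompactSupport
    simpa [pow_two, Pi.mul_def] using h.mul_right (f' := fun x => φ x)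
  have hint : Integrable (fun x => (φ x) ^ 2) := hc.integrable_of_hasCompactSupport hcs
  have hpos : 0 < ∫ x, (φ x) ^ 2 := by
    have h1 : ∫ x in closedBall (0 : Ed d) 1, (φ x) ^ 2 ≤ ∫ x, (φ x) ^ 2 :=
      setIntegral_le_integral hint (Filter.Eventually.of_forall fun x => sq_nonneg _)
    have h2 : ∫ x in closedBall (0 : Ed d) 1, (φ x) ^ 2
        = (volume (closedBall (0 : Ed d) 1)).toReal := by
      rw [setIntegral_congr_fun (measurableSet_closedBall)
        (fun x hx => by simp [φ.one_of_mem_closedBall hx] :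
          ∀ x ∈ closedBall (0 : Ed d) 1, (φ x) ^ 2 = 1)]
      simp
      rfl
    have h3 : 0 < (volume (closedBall (0 : Ed d) 1)).toReal :=
      ENNReal.toReal_pos (measure_closedBall_pos volume _ one_pos).ne'
        measure_closedBall_lt_top.ne
    linarith
  refine ⟨fun x => Real.sqrt (∫ y, (φ y) ^ 2)⁻¹ * φ x, ?_, ?_, ?_⟩
  · exact contDiff_const.mul φ.contDiff
  · exact φ.hasCompactSupport.mul_left
  · have h4 : ∀ x : Ed d, (Real.sqrt (∫ y, (φ y) ^ 2)⁻¹ * φ x) ^ 2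
        = (∫ y, (φ y) ^ 2)⁻¹ * (φ x) ^ 2 := fun x => by
      rw [mul_pow, Real.sq_sqrt (by positivity)]
    simp_rw [h4]
    rw [integral_const_mul, inv_mul_cancel₀ hpos.ne']

lemma norm_gradient_eq (d : ℕ) (f : Ed d → ℝ) (x : Ed d) :
    ‖gradient f x‖ = ‖fderiv ℝ f x‖ := by
  rw [gradient]
  exact (InnerProductSpace.toDual ℝ (Ed d)).symm.norm_map _

/-- Scaling: test functions with arbitrarily small Dirichlet energy. -/
lemma exists_small (d : ℕ) (hd : 0 < d) {ε : ℝ} (hε : 0 < ε) :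
    ∃ f : Ed d → ℝ, ContDiff ℝ 1 f ∧ HasCompactSupport f ∧ (∫ x, f x ^ 2) = 1 ∧
      1 / 2 * (∫ x, ‖gradient f x‖ ^ 2) < ε := by
  obtain ⟨f, hf1, hf2, hf3⟩ := exists_test d hd
  set K := ∫ x, ‖gradient f x‖ ^ 2 with hKdef
  have hK0 : 0 ≤ K := integral_nonneg fun x => by positivity
  set c : ℝ := Real.sqrt (ε / (K + 1)) with hcdef
  have hc0 : 0 < c := Real.sqrt_pos.2 (by positivity)
  have hc2 : c ^ 2 = ε / (K + 1) := Real.sq_sqrt (by positivity)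
  have hc2K : 1 / 2 * (c ^ 2 * K) < ε := by
    have h' : ε / (K + 1) * K ≤ ε := by
      rw [div_mul_eq_mul_div, div_le_iff₀ (by positivity)]
      nlinarith
    rw [hc2]
    linarith
  set k : ℝ := Real.sqrt (c ^ d) with hkdef
  have hkpos : 0 < k := Real.sqrt_pos.2 (by positivity)
  have hk2 : k ^ 2 = c ^ d := Real.sq_sqrt (by positivity)
  have hcomp : ∀ F : Ed d → ℝ, ∫ x, F (c • x) = (c ^ d)⁻¹ * ∫ x, F x := by
    intro F
    have h := MeasureTheory.Measure.integral_comp_smul (volume : Measure (Ed d)) F c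
    rw [h, finrank_euclideanSpace_fin, abs_of_pos (by positivity), smul_eq_mul]
  refine ⟨fun x => k * f (c • x), ?_, ?_, ?_, ?_⟩
  · exact contDiff_const.mul (hf1.comp (contDiff_const_smul c))
  · have h : HasCompactSupport (f ∘ (fun x : Ed d => c • x)) :=
      hf2.comp_isClosedEmbedding (Homeomorph.smulOfNeZero c hc0.ne').isClosedEmbedding
    exact (h : HasCompactSupport fun x : Ed d => f (c • x)).mul_left
  · have : ∀ x : Ed d, (k * f (c • x)) ^ 2 = k ^ 2 * (fun y => f y ^ 2) (c • x) := by
      intro x; ring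
    simp_rw [this]
    rw [integral_const_mul, hcomp (fun y => f y ^ 2), hf3, hk2]
    field_simp
  · have hgrad : ∀ x : Ed d, ‖gradient (fun y => k * f (c • y)) x‖ ^ 2
        = k ^ 2 * c ^ 2 * (fun y => ‖gradient f y‖ ^ 2) (c • x) := by
      intro x
      show ‖gradient (fun y => k * f (c • y)) x‖ ^ 2 = k ^ 2 * c ^ 2 * ‖gradient f (c • x)‖ ^ 2
      have hL : HasFDerivAt (fun x : Ed d => c • x)
          (c • ContinuousLinearMap.id ℝ (Ed d)) x := by
        exact (hasFDerivAt_id x).const_smul c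
      have hfd : HasFDerivAt f (fderiv ℝ f (c • x)) (c • x) :=
        (hf1.differentiable one_ne_zero (c • x)).hasFDerivAt
      have hcomp' : HasFDerivAt (fun y : Ed d => f (c • y))
          ((fderiv ℝ f (c • x)).comp (c • ContinuousLinearMap.id ℝ (Ed d))) x :=
        hfd.comp x hL
      have hg' : HasFDerivAt (fun y : Ed d => k * f (c • y))
          (k • ((fderiv ℝ f (c • x)).comp (c • ContinuousLinearMap.id ℝ (Ed d)))) x :=
        hcomp'.const_mul k
      have hsimp : (fderiv ℝ f (c • x)).comp (c • ContinuousLinearMap.id ℝ (Ed d))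
          = c • fderiv ℝ f (c • x) := by
        ext v
        simp [_root_.map_smul]
      rw [norm_gradient_eq, norm_gradient_eq, hg'.fderiv, hsimp]
      rw [norm_smul, norm_smul, Real.norm_eq_abs, Real.norm_eq_abs,
        abs_of_pos hkpos, abs_of_pos hc0]
      ring
    simp_rw [hgrad]
    rw [integral_const_mul, hcomp (fun y => ‖gradient f y‖ ^ 2), ← hKdef, hk2]
    have hcd : (0 : ℝ) < c ^ d := by positivity
    calc 1 / 2 * (c ^ d * c ^ 2 * ((c ^ d)⁻¹ * K)) = 1 / 2 * (c ^ 2 * K) := by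
          field_simp
      _ < ε := hc2K

lemma sq_integrable {d : ℕ} {f : Ed d → ℝ} (hf : ContDiff ℝ 1 f)
    (hfc : HasCompactSupport f) : Integrable (fun x => f x ^ 2) := by
  refine (hf.continuous.pow 2).integrable_of_hasCompactSupport ?_
  simpa [pow_two] using hfc.mul_right (f' := f)

lemma grad_int_nonneg {d : ℕ} (f : Ed d → ℝ) : 0 ≤ ∫ x, ‖gradient f x‖ ^ 2 :=
  integral_nonneg fun x => by positivity

lemma ES_nonempty (d : ℕ) (hd : 0 < d) (V : Ed d → ℝ) : (ES d V).Nonempty := by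
  obtain ⟨f, h1, h2, h3⟩ := exists_test d hd
  exact ⟨_, f, h1, h2, h3, rfl⟩

lemma mulV_integrable {d : ℕ} {V : Ed d → ℝ} (hV : Measurable V) {C : ℝ}
    (hC : ∀ x, |V x| ≤ C) {f : Ed d → ℝ} (hf : ContDiff ℝ 1 f)
    (hfc : HasCompactSupport f) : Integrable (fun x => V x * f x ^ 2) :=
  (sq_integrable hf hfc).bdd_mul hV.aestronglyMeasurable (c := C) (ae_of_all _ fun x => hC x)

/-- For a multiplier `u` with `|u| ≤ 1`, `T = ∫ u f²` satisfies `|T| ≤ 1`. -/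
lemma abs_T_le {d : ℕ} {u : Ed d → ℝ} (hu : Measurable u) (hub : ∀ x, |u x| ≤ 1)
    {f : Ed d → ℝ} (hf : ContDiff ℝ 1 f) (hfc : HasCompactSupport f)
    (hf3 : (∫ x, f x ^ 2) = 1) : |∫ x, u x * f x ^ 2| ≤ 1 := by
  have hsq := sq_integrable hf hfc
  have hint := mulV_integrable hu hub hf hfc
  calc |∫ x, u x * f x ^ 2| ≤ ∫ x, |u x * f x ^ 2| := by
        exact norm_integral_le_integral_norm (μ := volume) (fun x => u x * f x ^ 2)
    _ ≤ ∫ x, f x ^ 2 := by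
        refine integral_mono hint.abs hsq fun x => ?_
        have h1 := hub x
        have h2 : |f x ^ 2| = f x ^ 2 := abs_of_nonneg (sq_nonneg _)
        rw [abs_mul, h2]
        nlinarith [sq_nonneg (f x), abs_nonneg (u x)]
    _ = 1 := hf3

lemma int_mul_eq {d : ℕ} (u : Ed d → ℝ) (f : Ed d → ℝ) (α : ℝ) :
    ∫ x, (α * u x) * f x ^ 2 = α * ∫ x, u x * f x ^ 2 := by
  simp_rw [mul_assoc]
  exact integral_const_mul α _

lemma ES_elem_lb {d : ℕ} {u : Ed d → ℝ} (hu : Measurable u) (hub : ∀ x, |u x| ≤ 1)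
    (α : ℝ) {r : ℝ} (hr : r ∈ ES d (fun x => α * u x)) : -|α| ≤ r := by
  obtain ⟨f, hf1, hf2, hf3, rfl⟩ := hr
  have hA := grad_int_nonneg (d := d) f
  have hT := abs_T_le hu hub hf1 hf2 hf3
  have h2 := int_mul_eq u f α
  have habs : |α * ∫ x, u x * f x ^ 2| ≤ |α| := by
    rw [abs_mul]
    nlinarith [abs_nonneg α]
  have := abs_le.1 habs
  rw [h2]
  linarith [this.2]

lemma ES_bddBelow {d : ℕ} {u : Ed d → ℝ} (hu : Measurable u) (hub : ∀ x, |u x| ≤ 1)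
    (α : ℝ) : BddBelow (ES d (fun x => α * u x)) :=
  ⟨-|α|, fun _ hr => ES_elem_lb hu hub α hr⟩

lemma eigen_abs_lb {d : ℕ} (hd : 0 < d) {u : Ed d → ℝ} (hu : Measurable u)
    (hub : ∀ x, |u x| ≤ 1) (α : ℝ) : -|α| ≤ eigen d (fun x => α * u x) := by
  rw [eigen_eq]
  exact le_csInf (ES_nonempty d hd _) fun r hr => ES_elem_lb hu hub α hr

/-- If `α * u ≤ β` a.e. then `−β ≤ eigen d (α • u)`. -/
lemma eigen_ae_lb {d : ℕ} (hd : 0 < d) {u : Ed d → ℝ} (hu : Measurable u)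
    (hub : ∀ x, |u x| ≤ 1) {α β : ℝ} (hae : ∀ᵐ x, α * u x ≤ β) :
    -β ≤ eigen d (fun x => α * u x) := by
  rw [eigen_eq]
  refine le_csInf (ES_nonempty d hd _) ?_
  rintro r ⟨f, hf1, hf2, hf3, rfl⟩
  have hA := grad_int_nonneg (d := d) f
  have hsq := sq_integrable hf1 hf2
  have hint : Integrable (fun x => (α * u x) * f x ^ 2) := by
    refine mulV_integrable (hu.const_mul α) (C := |α|) (fun x => ?_) hf1 hf2
    rw [abs_mul]
    nlinarith [abs_nonneg α, hub x, abs_nonneg (u x)]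
  have hle : ∫ x, (α * u x) * f x ^ 2 ≤ ∫ x, β * f x ^ 2 := by
    refine integral_mono_ae hint (hsq.const_mul β) ?_
    filter_upwards [hae] with x hx
    exact mul_le_mul_of_nonneg_right hx (sq_nonneg _)
  rw [integral_const_mul, hf3, mul_one] at hle
  linarith

/-- Lipschitz estimate for `eigen` in the coupling constant. -/
lemma eigen_lip {d : ℕ} (hd : 0 < d) {u : Ed d → ℝ} (hu : Measurable u)
    (hub : ∀ x, |u x| ≤ 1) (α β : ℝ) :
    eigen d (fun x => α * u x) ≤ eigen d (fun x => β * u x) + |α - β| := by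
  rw [eigen_eq d (fun x => β * u x), ← sub_le_iff_le_add]
  refine le_csInf (ES_nonempty d hd _) ?_
  rintro r ⟨f, hf1, hf2, hf3, rfl⟩
  rw [sub_le_iff_le_add]
  have hT := abs_T_le hu hub hf1 hf2 hf3
  have hmem : (1 / 2 * (∫ x, ‖gradient f x‖ ^ 2) - ∫ x, (α * u x) * f x ^ 2)
      ∈ ES d (fun x => α * u x) := ⟨f, hf1, hf2, hf3, rfl⟩
  have h1 : eigen d (fun x => α * u x)
      ≤ 1 / 2 * (∫ x, ‖gradient f x‖ ^ 2) - ∫ x, (α * u x) * f x ^ 2 := by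
    rw [eigen_eq]
    exact csInf_le (ES_bddBelow hu hub α) hmem
  rw [int_mul_eq u f α] at h1
  rw [int_mul_eq u f β]
  have h3 : (β - α) * ∫ x, u x * f x ^ 2 ≤ |α - β| := by
    have h4 : |(β - α) * ∫ x, u x * f x ^ 2| ≤ |β - α| := by
      rw [abs_mul]
      nlinarith [abs_nonneg (β - α)]
    have := (abs_le.1 h4).2
    rw [abs_sub_comm β α] at this
    exact this
  linarith

/-- Concavity estimate for `eigen` in the coupling constant. -/
lemma eigen_concave {d : ℕ} (hd : 0 < d) {u : Ed d → ℝ} (hu : Measurable u)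
    (hub : ∀ x, |u x| ≤ 1) (α β a b : ℝ) (ha : 0 ≤ a) (hb : 0 ≤ b) (hab : a + b = 1) :
    a * eigen d (fun x => α * u x) + b * eigen d (fun x => β * u x)
      ≤ eigen d (fun x => (a * α + b * β) * u x) := by
  rw [eigen_eq d (fun x => (a * α + b * β) * u x)]
  refine le_csInf (ES_nonempty d hd _) ?_
  rintro r ⟨f, hf1, hf2, hf3, rfl⟩
  have h1 : eigen d (fun x => α * u x)
      ≤ 1 / 2 * (∫ x, ‖gradient f x‖ ^ 2) - ∫ x, (α * u x) * f x ^ 2 :=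
    csInf_le (ES_bddBelow hu hub α) ⟨f, hf1, hf2, hf3, rfl⟩
  have h2 : eigen d (fun x => β * u x)
      ≤ 1 / 2 * (∫ x, ‖gradient f x‖ ^ 2) - ∫ x, (β * u x) * f x ^ 2 :=
    csInf_le (ES_bddBelow hu hub β) ⟨f, hf1, hf2, hf3, rfl⟩
  rw [int_mul_eq u f α] at h1
  rw [int_mul_eq u f β] at h2
  rw [int_mul_eq u f (a * α + b * β)]
  calc a * eigen d (fun x => α * u x) + b * eigen d (fun x => β * u x)
      ≤ a * (1 / 2 * (∫ x, ‖gradient f x‖ ^ 2) - α * ∫ x, u x * f x ^ 2)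
        + b * (1 / 2 * (∫ x, ‖gradient f x‖ ^ 2) - β * ∫ x, u x * f x ^ 2) :=
        add_le_add (mul_le_mul_of_nonneg_left h1 ha) (mul_le_mul_of_nonneg_left h2 hb)
    _ = 1 / 2 * (∫ x, ‖gradient f x‖ ^ 2) - (a * α + b * β) * ∫ x, u x * f x ^ 2 := by
        have hb' : b = 1 - a := by linarith
        rw [hb']; ring

lemma ES_zero_lb {d : ℕ} {r : ℝ} (hr : r ∈ ES d (fun _ => (0 : ℝ))) : 0 ≤ r := by
  obtain ⟨f, hf1, hf2, hf3, rfl⟩ := hr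
  have hA := grad_int_nonneg (d := d) f
  have : ∫ x, (0 : ℝ) * f x ^ 2 = 0 := by simp
  rw [this]
  linarith

lemma eigen_zero (d : ℕ) (hd : 0 < d) : eigen d (fun _ => (0 : ℝ)) = 0 := by
  refine le_antisymm ?_ ?_
  · refine le_of_forall_gt_imp_ge_of_dense fun ε hε => ?_
    obtain ⟨f, h1, h2, h3, h4⟩ := exists_small d hd hε
    have hmem : (1 / 2 * (∫ x, ‖gradient f x‖ ^ 2) - ∫ x, (0 : ℝ) * f x ^ 2)
        ∈ ES d (fun _ => (0 : ℝ)) := ⟨f, h1, h2, h3, rfl⟩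
    have h5 : eigen d (fun _ => (0 : ℝ))
        ≤ 1 / 2 * (∫ x, ‖gradient f x‖ ^ 2) - ∫ x, (0 : ℝ) * f x ^ 2 :=
      csInf_le ⟨0, fun _ hr => ES_zero_lb hr⟩ hmem
    have h6 : ∫ x, (0 : ℝ) * f x ^ 2 = 0 := by simp
    rw [h6] at h5
    linarith
  · exact le_csInf (ES_nonempty d hd _) fun _ hr => ES_zero_lb hr

end Aux

/-- with `H` the Legendre transform of the log-Laplace
transform of the scenery variable `ξ` (`|ξ| ≤ 1` a.s., `E ξ = 0`,
`E ξ² ≠ 0`), `m = essinf ξ`, `M = esssup ξ`, the function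
`l(α) = inf { λ(αu, ℝ^d) : u ∈ B₁, I(u) ≤ d }` is concave, continuous,
`l(0) = 0`, `l ≤ 0` everywhere, and `−αM ≤ l(α)` for `α ≥ 0`,
`−αm ≤ l(α)` for `α ≤ 0`. -/
theorem stmt17 {Ω : Type*} [MeasurableSpace Ω] (μ : Measure Ω) [IsProbabilityMeasure μ]
    (ξ : Ω → ℝ) (hmeas : Measurable ξ)
    (hbdd : ∀ᵐ ω ∂μ, |ξ ω| ≤ 1)
    (hmean : ∫ ω, ξ ω ∂μ = 0)
    (hvar : ∫ ω, (ξ ω) ^ 2 ∂μ ≠ 0)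
    (m M : ℝ) (hm : m = essInf ξ μ) (hM : M = essSup ξ μ)
    (Λ : ℝ → ℝ)
    (hΛ : ∀ α : ℝ, Λ α = Real.log (∫ ω, Real.exp (α * ξ ω) ∂μ))
    (H : ℝ → ℝ≥0∞)
    (hH : ∀ y : ℝ, H y = ⨆ α : ℝ, ENNReal.ofReal (α * y - Λ α))
    (d : ℕ) (hd : 0 < d) :
    ConcaveOn ℝ Set.univ (ell d H) ∧
    Continuous (ell d H) ∧
    ell d H 0 = 0 ∧
    (∀ α : ℝ, ell d H α ≤ 0) ∧
    (∀ α : ℝ, 0 ≤ α → -(α * M) ≤ ell d H α) ∧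
    (∀ α : ℝ, α ≤ 0 → -(α * m) ≤ ell d H α) := by
  -- Basic integrability facts about ξ.
  have hξint : Integrable ξ μ := by
    refine Integrable.mono' (integrable_const 1) hmeas.aestronglyMeasurable ?_
    filter_upwards [hbdd] with ω h
    simpa [Real.norm_eq_abs] using h
  have hexp : ∀ β : ℝ, Integrable (fun ω => Real.exp (β * ξ ω)) μ := by
    intro β
    refine Integrable.mono' (integrable_const (Real.exp |β|))
      ((hmeas.const_mul β).exp).aestronglyMeasurable ?_
    filter_upwards [hbdd] with ω h
    rw [Real.norm_eq_abs, abs_of_pos (Real.exp_pos _)]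
    refine Real.exp_le_exp.2 ?_
    calc β * ξ ω ≤ |β * ξ ω| := le_abs_self _
      _ = |β| * |ξ ω| := abs_mul _ _
      _ ≤ |β| * 1 := mul_le_mul_of_nonneg_left h (abs_nonneg β)
      _ = |β| := mul_one _
  have hone_le : ∀ β : ℝ, (1 : ℝ) ≤ ∫ ω, Real.exp (β * ξ ω) ∂μ := by
    intro β
    have h1 : ∫ ω, (1 + β * ξ ω) ∂μ = 1 := by
      rw [integral_add (integrable_const 1) (hξint.const_mul β), integral_const,
        integral_const_mul, hmean]
      simp
    calc (1 : ℝ) = ∫ ω, (1 + β * ξ ω) ∂μ := h1.symm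
      _ ≤ ∫ ω, Real.exp (β * ξ ω) ∂μ := by
          refine integral_mono ((integrable_const 1).add (hξint.const_mul β)) (hexp β) ?_
          intro ω
          have := Real.add_one_le_exp (β * ξ ω)
          simp only []
          linarith
  have hpos : ∀ β : ℝ, (0 : ℝ) < ∫ ω, Real.exp (β * ξ ω) ∂μ :=
    fun β => lt_of_lt_of_le one_pos (hone_le β)
  have hΛ0 : ∀ β : ℝ, 0 ≤ Λ β := fun β => by
    rw [hΛ]; exact Real.log_nonneg (hone_le β)
  -- a.e. bounds by essSup / essInf
  have hbddU : Filter.IsBoundedUnder (· ≤ ·) (ae μ) ξ :=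
    ⟨1, Filter.eventually_map.2 (hbdd.mono fun ω h => (abs_le.1 h).2)⟩
  have hbddL : Filter.IsBoundedUnder (· ≥ ·) (ae μ) ξ :=
    ⟨-1, Filter.eventually_map.2 (hbdd.mono fun ω h => (abs_le.1 h).1)⟩
  have haeM : ∀ᵐ ω ∂μ, ξ ω ≤ M := hM ▸ ae_le_essSup hbddU
  have haem : ∀ᵐ ω ∂μ, m ≤ ξ ω := hm ▸ ae_essInf_le hbddL
  -- Λ bounds
  have hΛM : ∀ β : ℝ, 0 ≤ β → Λ β ≤ β * M := by
    intro β hβ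
    rw [hΛ]
    have h1 : ∫ ω, Real.exp (β * ξ ω) ∂μ ≤ Real.exp (β * M) := by
      calc ∫ ω, Real.exp (β * ξ ω) ∂μ ≤ ∫ _ω, Real.exp (β * M) ∂μ := by
            refine integral_mono_ae (hexp β) (integrable_const _) ?_
            filter_upwards [haeM] with ω h
            exact Real.exp_le_exp.2 (mul_le_mul_of_nonneg_left h hβ)
        _ = Real.exp (β * M) := by simp
    exact (Real.log_le_iff_le_exp (hpos β)).2 h1
  have hΛm : ∀ β : ℝ, β ≤ 0 → Λ β ≤ β * m := by
    intro β hβ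
    rw [hΛ]
    have h1 : ∫ ω, Real.exp (β * ξ ω) ∂μ ≤ Real.exp (β * m) := by
      calc ∫ ω, Real.exp (β * ξ ω) ∂μ ≤ ∫ _ω, Real.exp (β * m) ∂μ := by
            refine integral_mono_ae (hexp β) (integrable_const _) ?_
            filter_upwards [haem] with ω h
            exact Real.exp_le_exp.2 (mul_le_mul_of_nonpos_left h hβ)
        _ = Real.exp (β * m) := by simp
    exact (Real.log_le_iff_le_exp (hpos β)).2 h1
  -- H at 0 vanishes
  have hH0 : H 0 = 0 := by
    rw [hH]
    have h : (fun α : ℝ => ENNReal.ofReal (α * 0 - Λ α)) = fun _ => (0 : ℝ≥0∞) :=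
      funext fun α => ENNReal.ofReal_eq_zero.2 (by have := hΛ0 α; nlinarith)
    rw [h, iSup_const]
  -- H is infinite outside [m, M]
  have hHtopM : ∀ y : ℝ, M < y → H y = ⊤ := by
    intro y hy
    rw [hH, eq_top_iff, ← ENNReal.iSup_natCast]
    refine iSup_le fun n => ?_
    have htpos : 0 < y - M := sub_pos.2 hy
    set β : ℝ := (n : ℝ) / (y - M) with hβdef
    have hβ0 : 0 ≤ β := by positivity
    have hβt : β * (y - M) = n := div_mul_cancel₀ _ htpos.ne'
    have hval : (n : ℝ) ≤ β * y - Λ β := by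
      have := hΛM β hβ0
      nlinarith
    calc (n : ℝ≥0∞) = ENNReal.ofReal n := (ENNReal.ofReal_natCast n).symm
      _ ≤ ENNReal.ofReal (β * y - Λ β) := ENNReal.ofReal_le_ofReal hval
      _ ≤ ⨆ α : ℝ, ENNReal.ofReal (α * y - Λ α) :=
          le_iSup (fun α : ℝ => ENNReal.ofReal (α * y - Λ α)) β
  have hHtopm : ∀ y : ℝ, y < m → H y = ⊤ := by
    intro y hy
    rw [hH, eq_top_iff, ← ENNReal.iSup_natCast]
    refine iSup_le fun n => ?_
    have htpos : 0 < m - y := sub_pos.2 hy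
    set β : ℝ := -((n : ℝ) / (m - y)) with hβdef
    have hβ0 : β ≤ 0 := neg_nonpos.2 (by positivity)
    have hβt : β * (y - m) = n := by
      have h' : β * (y - m) = ((n : ℝ) / (m - y)) * (m - y) := by rw [hβdef]; ring
      rw [h', div_mul_cancel₀ _ htpos.ne']
    have hval : (n : ℝ) ≤ β * y - Λ β := by
      have := hΛm β hβ0
      nlinarith
    calc (n : ℝ≥0∞) = ENNReal.ofReal n := (ENNReal.ofReal_natCast n).symm
      _ ≤ ENNReal.ofReal (β * y - Λ β) := ENNReal.ofReal_le_ofReal hval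
      _ ≤ ⨆ α : ℝ, ENNReal.ofReal (α * y - Λ α) :=
          le_iSup (fun α : ℝ => ENNReal.ofReal (α * y - Λ α)) β
  -- admissible profiles are a.e. bounded between m and M
  have haebd : ∀ u : EuclideanSpace ℝ (Fin d) → ℝ, Measurable u →
      (∫⁻ x, H (u x)) ≤ (d : ℝ≥0∞) → (∀ᵐ x, u x ≤ M) ∧ (∀ᵐ x, m ≤ u x) := by
    intro u hu hI
    constructor
    · rw [ae_iff]
      by_contra hne
      have hSm : MeasurableSet {x : Ed d | M < u x} := measurableSet_lt measurable_const hu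
      have hset : {x : Ed d | ¬ u x ≤ M} = {x : Ed d | M < u x} := by
        ext x; simp [not_le]
      rw [hset] at hne
      have h1 : ∫⁻ x in {x : Ed d | M < u x}, H (u x) = ⊤ * volume {x : Ed d | M < u x} := by
        rw [setLIntegral_congr_fun hSm (fun x hx => hHtopM (u x) hx),
          setLIntegral_const]
      have h2 : ⊤ * volume {x : Ed d | M < u x} ≤ (d : ℝ≥0∞) :=
        h1 ▸ (setLIntegral_le_lintegral _ _).trans hI
      rw [ENNReal.top_mul hne] at h2
      exact (ENNReal.natCast_ne_top d) (top_le_iff.1 h2)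
    · rw [ae_iff]
      by_contra hne
      have hSm : MeasurableSet {x : Ed d | u x < m} := measurableSet_lt hu measurable_const
      have hset : {x : Ed d | ¬ m ≤ u x} = {x : Ed d | u x < m} := by
        ext x; simp [not_le]
      rw [hset] at hne
      have h1 : ∫⁻ x in {x : Ed d | u x < m}, H (u x) = ⊤ * volume {x : Ed d | u x < m} := by
        rw [setLIntegral_congr_fun hSm (fun x hx => hHtopm (u x) hx),
          setLIntegral_const]
      have h2 : ⊤ * volume {x : Ed d | u x < m} ≤ (d : ℝ≥0∞) :=
        h1 ▸ (setLIntegral_le_lintegral _ _).trans hI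
      rw [ENNReal.top_mul hne] at h2
      exact (ENNReal.natCast_ne_top d) (top_le_iff.1 h2)
  -- basic facts about the variational set of ell
  have hzub : ∀ x : Ed d, |(fun _ : Ed d => (0 : ℝ)) x| ≤ 1 := fun x => by norm_num
  have hzI : (∫⁻ x : Ed d, H ((fun _ : Ed d => (0 : ℝ)) x)) ≤ (d : ℝ≥0∞) := by
    simp [hH0]
  have hLSne : ∀ α : ℝ, (LS d H α).Nonempty := fun α =>
    ⟨eigen d (fun x : Ed d => α * (0 : ℝ)), (fun _ => (0 : ℝ)), measurable_const,
      hzub, hzI, rfl⟩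
  have hLSbdd : ∀ α : ℝ, BddBelow (LS d H α) := by
    intro α
    refine ⟨-|α|, ?_⟩
    rintro r ⟨u, hu, hub, hI, rfl⟩
    exact eigen_abs_lb hd hu hub α
  have hell_le : ∀ (α : ℝ) (u : Ed d → ℝ), Measurable u → (∀ x, |u x| ≤ 1) →
      (∫⁻ x, H (u x)) ≤ (d : ℝ≥0∞) → ell d H α ≤ eigen d (fun x => α * u x) := by
    intro α u hu hub hI
    rw [ell_eq]
    exact csInf_le (hLSbdd α) ⟨u, hu, hub, hI, rfl⟩
  -- l(0) = 0
  have hzeroV : (fun x : Ed d => (0 : ℝ) * (0 : ℝ)) = fun _ : Ed d => (0 : ℝ) := by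
    funext x; ring
  have hell0 : ell d H 0 = 0 := by
    have hset : LS d H 0 = {eigen d (fun _ : Ed d => (0 : ℝ))} := by
      ext r
      constructor
      · rintro ⟨u, hu, hub, hI, rfl⟩
        have h : (fun x : Ed d => 0 * u x) = fun _ : Ed d => (0 : ℝ) :=
          funext fun x => zero_mul _
        rw [h]
        rfl
      · intro hr
        rw [Set.mem_singleton_iff] at hr
        refine ⟨fun _ => (0 : ℝ), measurable_const, hzub, hzI, ?_⟩
        rw [hr]
        congr 1
        funext x
        ring
    rw [ell_eq, hset, csInf_singleton, eigen_zero d hd]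
  -- l ≤ 0
  have hell_nonpos : ∀ α : ℝ, ell d H α ≤ 0 := by
    intro α
    have h := hell_le α (fun _ => (0 : ℝ)) measurable_const hzub hzI
    have heq : (fun x : Ed d => α * (0 : ℝ)) = fun _ : Ed d => (0 : ℝ) :=
      funext fun x => mul_zero α
    rw [heq, eigen_zero d hd] at h
    exact h
  -- lower bounds
  have hlbM : ∀ α : ℝ, 0 ≤ α → -(α * M) ≤ ell d H α := by
    intro α hα
    rw [ell_eq]
    refine le_csInf (hLSne α) ?_
    rintro r ⟨u, hu, hub, hI, rfl⟩
    obtain ⟨hMae, -⟩ := haebd u hu hI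
    exact eigen_ae_lb hd hu hub
      (hMae.mono fun x hx => mul_le_mul_of_nonneg_left hx hα)
  have hlbm : ∀ α : ℝ, α ≤ 0 → -(α * m) ≤ ell d H α := by
    intro α hα
    rw [ell_eq]
    refine le_csInf (hLSne α) ?_
    rintro r ⟨u, hu, hub, hI, rfl⟩
    obtain ⟨-, hmae⟩ := haebd u hu hI
    exact eigen_ae_lb hd hu hub
      (hmae.mono fun x hx => mul_le_mul_of_nonpos_left hx hα)
  -- Lipschitz continuity
  have hlip : ∀ α β : ℝ, ell d H α ≤ ell d H β + |α - β| := by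
    intro α β
    rw [ell_eq d H β, ← sub_le_iff_le_add]
    refine le_csInf (hLSne β) ?_
    rintro r ⟨u, hu, hub, hI, rfl⟩
    rw [sub_le_iff_le_add]
    exact (hell_le α u hu hub hI).trans (eigen_lip hd hu hub α β)
  have hcont : Continuous (ell d H) := by
    have hlw : LipschitzWith 1 (ell d H) := by
      refine LipschitzWith.of_dist_le_mul fun α β => ?_
      rw [Real.dist_eq, Real.dist_eq, NNReal.coe_one, one_mul, abs_sub_le_iff]
      constructor
      · linarith [hlip α β]
      · have h := hlip β α
        rw [abs_sub_comm β α] at h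
        linarith
    exact hlw.continuous
  -- concavity
  have hconc : ConcaveOn ℝ Set.univ (ell d H) := by
    refine ⟨convex_univ, ?_⟩
    intro α _ β _ a b ha hb hab
    simp only [smul_eq_mul]
    rw [ell_eq d H (a * α + b * β)]
    refine le_csInf (hLSne _) ?_
    rintro r ⟨u, hu, hub, hI, rfl⟩
    have h1 := hell_le α u hu hub hI
    have h2 := hell_le β u hu hub hI
    have h3 := eigen_concave hd hu hub α β a b ha hb hab
    calc a * ell d H α + b * ell d H β
        ≤ a * eigen d (fun x => α * u x) + b * eigen d (fun x => β * u x) :=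
          add_le_add (mul_le_mul_of_nonneg_left h1 ha) (mul_le_mul_of_nonneg_left h2 hb)
      _ ≤ _ := h3
  exact ⟨hconc, hcont, hell0, hell_nonpos, hlbM, hlbm⟩
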